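/- For every integer N ≥ 1, the polynomial P_N built by the recursion for order N+1 and the polynomial P_{N−1} built by the same recursion for order N satisfy (P_N)' = P_{N−1}, where (P_N)' denotes the derivative of the polynomial P_N. -/

import Mathlib

/-- With `α > 0` and `A = e^{−α}/(1 − e^{−α})`, let `N ≥ 1`.  Let
`b` be the coefficient sequence built by the recursion for order `N`
(`b (N−1) = 1/(1 − e^{−α})`, `b (N−k) = A·Σ_{i=1}^{k−1} b (N−k+i)/i!` for `2 ≤ k ≤ N`)
with polynomial `P_{N−1} = Σ_{k<N} (b k/k!)·X^k`, and let `b'` be the sequence built by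
the same recursion at order `N+1`, with polynomial `P_N = Σ_{k<N+1} (b' k/k!)·X^k`.
Then `(P_N)' = P_{N−1}`. -/
theorem derivative_of_next_order_exponential_spline_polynomial
    (α : ℝ) (hα : 0 < α) (N : ℕ) (hN : 1 ≤ N)
    (b b' : ℕ → ℝ)
    (hb_top : b (N - 1) = 1 / (1 - Real.exp (-α)))
    (hb_rec : ∀ k, 2 ≤ k → k ≤ N →
      b (N - k) = Real.exp (-α) / (1 - Real.exp (-α)) *
        ∑ i ∈ Finset.Icc 1 (k - 1), b (N - k + i) / (Nat.factorial i : ℝ))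
    (hb'_top : b' (N + 1 - 1) = 1 / (1 - Real.exp (-α)))
    (hb'_rec : ∀ k, 2 ≤ k → k ≤ N + 1 →
      b' (N + 1 - k) = Real.exp (-α) / (1 - Real.exp (-α)) *
        ∑ i ∈ Finset.Icc 1 (k - 1), b' (N + 1 - k + i) / (Nat.factorial i : ℝ)) :
    Polynomial.derivative
        (∑ k ∈ Finset.range (N + 1),
          Polynomial.C (b' k / (Nat.factorial k : ℝ)) * Polynomial.X ^ k)
      = ∑ k ∈ Finset.range N,
          Polynomial.C (b k / (Nat.factorial k : ℝ)) * Polynomial.X ^ k := by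
  have key : ∀ k, 1 ≤ k → k ≤ N → b' (N + 1 - k) = b (N - k) := by
    intro k
    induction k using Nat.strong_induction_on with
    | _ k ih =>
      intro h1 hk
      rcases eq_or_lt_of_le h1 with h | h
      · have e1 : N + 1 - k = N + 1 - 1 := by omega
        have e2 : N - k = N - 1 := by omega
        rw [e1, e2, hb'_top, hb_top]
      · have h2 : 2 ≤ k := h
        rw [hb'_rec k h2 (by omega), hb_rec k h2 hk]
        congr 1
        apply Finset.sum_congr rfl
        intro i hi
        simp only [Finset.mem_Icc] at hi
        have hih := ih (k - i) (by omega) (by omega) (by omega)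
        have e1 : N + 1 - k + i = N + 1 - (k - i) := by omega
        have e2 : N - k + i = N - (k - i) := by omega
        rw [e1, e2, hih]
  have key' : ∀ j, j < N → b' (j + 1) = b j := by
    intro j hj
    have := key (N - j) (by omega) (by omega)
    have e1 : N + 1 - (N - j) = j + 1 := by omega
    have e2 : N - (N - j) = j := by omega
    rwa [e1, e2] at this
  rw [map_sum, Finset.sum_range_succ']
  have h0 : Polynomial.derivative
      (Polynomial.C (b' 0 / (Nat.factorial 0 : ℝ)) * Polynomial.X ^ 0) = 0 := by
    simp
  rw [h0, add_zero]
  apply Finset.sum_congr rfl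
  intro k hk
  rw [Finset.mem_range] at hk
  rw [Polynomial.derivative_C_mul_X_pow]
  congr 1
  rw [key' k hk]
  have hfac : (Nat.factorial (k + 1) : ℝ) = (k + 1) * Nat.factorial k := by
    push_cast [Nat.factorial_succ]; ring
  rw [hfac]
  have hk0 : (Nat.factorial k : ℝ) ≠ 0 := by positivity
  congr 1
  push_cast
  field_simp
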